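/- In any algebra (S,*,') satisfying the three axioms, the identity (x * y) * z' = x * (y * z') holds for all x, y, z in S. -/
import Mathlib


theorem stmt (S : Type*) (m : S → S → S) (i : S → S)
    (E1 : ∀ x, m (m x (i x)) x = x)
    (E2 : ∀ x y, m (m x (i x)) (m (i y) y) = m (m (i y) y) (m x (i x)))
    (E3 : ∀ x y z, m (m x y) z = m x (m y (i (i z)))) :
    ∀ x y z, m (m x y) (i z) = m x (m y (i z)) := by
  have L3 : ∀ x z, m (m (m x (i (i z))) (i z)) z = m x (i (i z)) := by
    intro x z
    rw [E3 x (i (i z)) (i z), E3, E1]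
  have L4 : ∀ z, m (i z) (i (i z)) = m (i z) z := by
    intro z
    have h := L3 (i z) z
    rw [E1 (i z)] at h
    exact h.symm
  have L5 : ∀ z, m (m (i z) z) (i z) = i z := by
    intro z
    have h := E1 (i z)
    rw [L4 z] at h
    exact h
  have L6 : ∀ x z, m (m x (i z)) z = m x (m (i z) z) := by
    intro x z
    rw [E3, L4]
  have L7 : ∀ x, m x (m (i x) x) = x := by
    intro x
    rw [← L6, E1]
  have L8 : ∀ z, m (m (i z) z) (m (i z) z) = m (i z) z := by
    intro z
    rw [← L6, L5]
  have L9 : ∀ z, m (i (i z)) (m (i z) z) = i (i z) := by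
    intro z
    have h : m (m (i (i z)) (i (i (i z)))) z = i (i z) := by
      rw [E3, L7]
    rw [L4 (i z)] at h
    rw [L6] at h
    exact h
  have L10 : ∀ x z, m (m x (m (i (i z)) (i z))) z = m x (i (i z)) := by
    intro x z
    rw [E3, L5]
  have L13 : ∀ x z, m (m x (i (i z))) (m (i z) z) = m x (i (i z)) := by
    intro x z
    rw [← L6, L3]
  have L21 : ∀ a b, m (m (i a) a) (m (i b) b) = m (m (i b) b) (m (i a) a) := by
    intro a b
    have h := E2 (i b) a
    rw [L4 b] at h
    exact h.symm
  have L33 : ∀ y z, m (m (m (i (i z)) (i z)) (m (i y) y)) z = m (m (i y) y) (i (i z)) := by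
    intro y z
    rw [L21 (i z) y, L10]
  have L34 : ∀ z, m (m (i z) z) (i (i (i z))) = i (i (i z)) := by
    intro z
    have h := L33 z (i z)
    rw [L13] at h
    rw [L6] at h
    rw [L9] at h
    exact h.symm
  have L35 : ∀ x z, m (m x (m (i z) z)) (i z) = m x (i (i (i z))) := by
    intro x z
    rw [E3, L34]
  have L44 : ∀ z, i (i (i z)) = i z := by
    intro z
    have h := L35 (m (i z) z) z
    rw [L8, L5, L34] at h
    exact h.symm
  intro x y z
  rw [E3, L44]
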